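/- Let g, h ∈ SL(3,ℂ) with g⁻¹h = [[a,b,c],[d,e,f],[g',h',i]] satisfying g' ≠ 0 and dh' − eg' ≠ 0. Then there exist unique upper triangular unipotent matrices u, v ∈ SL(3,ℂ) such that u⁻¹(g⁻¹h)v is counter-diagonal (nonzero entries only on the anti-diagonal). Writing u = [[1,x,y],[0,1,z],[0,0,1]] and v = [[1,r,s],[0,1,t],[0,0,1]], the solution is r = −h'/g', y = a/g', z = d/g', x = (ah'−bg')/(dh'−eg'), s = (ei−fh')/(dh'−eg'), t = (fg'−di)/(dh'−eg'), and the anti-diagonal of u⁻¹(g⁻¹h)v is (γ, β, α) = (1/(dh'−eg'), −(dh'−eg')/g', g'). -/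

import Mathlib

/-- Upper triangular unipotent 3×3 matrix. -/
def uni3 (x y z : ℂ) : Matrix (Fin 3) (Fin 3) ℂ := !![1, x, y; 0, 1, z; 0, 0, 1]

/-- A 3×3 matrix is counter-diagonal if its only (possibly) nonzero entries are in
positions (1,3), (2,2), (3,1). -/
def IsCounterDiag3 (m : Matrix (Fin 3) (Fin 3) ℂ) : Prop :=
  m 0 0 = 0 ∧ m 0 1 = 0 ∧ m 1 0 = 0 ∧ m 1 2 = 0 ∧ m 2 1 = 0 ∧ m 2 2 = 0

lemma uni3_inv (x y z : ℂ) : (uni3 x y z)⁻¹ = uni3 (-x) (x*z - y) (-z) := by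
  apply Matrix.inv_eq_right_inv
  ext i j
  fin_cases i <;> fin_cases j <;> simp [uni3, Matrix.mul_apply, Fin.sum_univ_succ]

lemma conj_formula (x y z r s t a b c d e f g' h' i : ℂ) :
    (uni3 x y z)⁻¹ * !![a,b,c;d,e,f;g',h',i] * uni3 r s t =
    !![a - x*d + (x*z - y)*g',
       (a - x*d + (x*z - y)*g')*r + (b - x*e + (x*z - y)*h'),
       (a - x*d + (x*z - y)*g')*s + (b - x*e + (x*z - y)*h')*t + (c - x*f + (x*z - y)*i);
       d - z*g',
       (d - z*g')*r + (e - z*h'),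
       (d - z*g')*s + (e - z*h')*t + (f - z*i);
       g', g'*r + h', g'*s + h'*t + i] := by
  rw [uni3_inv]
  ext i j
  fin_cases i <;> fin_cases j <;>
    simp [uni3, Matrix.mul_apply, Fin.sum_univ_succ] <;> ring

set_option maxHeartbeats 1000000 in
/-- for `A, B ∈ SL(3,ℂ)` with `A⁻¹B = [[a,b,c],[d,e,f],[g',h',i]]`,
`g' ≠ 0` and `dh' − eg' ≠ 0`, there exist unique upper triangular unipotent
`u = [[1,x,y],[0,1,z],[0,0,1]]` and `v = [[1,r,s],[0,1,t],[0,0,1]]` with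
`u⁻¹(A⁻¹B)v` counter-diagonal, with the explicit solution and anti-diagonal
`(γ, β, α) = (1/(dh'−eg'), −(dh'−eg')/g', g')`. -/
theorem unique_unipotent_conjugation_SL3 (A B : Matrix.SpecialLinearGroup (Fin 3) ℂ)
    (a b c d e f g' h' i : ℂ)
    (hm : (↑(A⁻¹ * B) : Matrix (Fin 3) (Fin 3) ℂ) = !![a, b, c; d, e, f; g', h', i])
    (h1 : g' ≠ 0) (h2 : d * h' - e * g' ≠ 0) :
    (∃! t : ℂ × ℂ × ℂ × ℂ × ℂ × ℂ,
      IsCounterDiag3 ((uni3 t.1 t.2.1 t.2.2.1)⁻¹ * (↑(A⁻¹ * B) : Matrix (Fin 3) (Fin 3) ℂ) *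
        uni3 t.2.2.2.1 t.2.2.2.2.1 t.2.2.2.2.2)) ∧
    (uni3 ((a * h' - b * g') / (d * h' - e * g')) (a / g') (d / g'))⁻¹ *
        (↑(A⁻¹ * B) : Matrix (Fin 3) (Fin 3) ℂ) *
        uni3 (-h' / g') ((e * i - f * h') / (d * h' - e * g'))
          ((f * g' - d * i) / (d * h' - e * g')) =
      !![0, 0, 1 / (d * h' - e * g'); 0, -(d * h' - e * g') / g', 0; g', 0, 0] := by
  have hdet : Matrix.det !![a, b, c; d, e, f; g', h', i] = 1 := by
    rw [← hm]; exact (A⁻¹ * B).property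
  rw [Matrix.det_fin_three] at hdet
  norm_num at hdet
  simp at hdet
  have h2' : h' * d - g' * e ≠ 0 := by intro h; apply h2; linear_combination h
  have h2'' : d * h' - g' * e ≠ 0 := by intro h; apply h2; linear_combination h
  have key : (uni3 ((a * h' - b * g') / (d * h' - e * g')) (a / g') (d / g'))⁻¹ *
        (↑(A⁻¹ * B) : Matrix (Fin 3) (Fin 3) ℂ) *
        uni3 (-h' / g') ((e * i - f * h') / (d * h' - e * g'))
          ((f * g' - d * i) / (d * h' - e * g')) =
      !![0, 0, 1 / (d * h' - e * g'); 0, -(d * h' - e * g') / g', 0; g', 0, 0] := by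
    rw [hm]
    set X := (a * h' - b * g') / (d * h' - e * g') with hX
    set Y := a / g' with hY
    set Z := d / g' with hZ
    set R := -h' / g' with hRv
    set S := (e * i - f * h') / (d * h' - e * g') with hS
    set T := (f * g' - d * i) / (d * h' - e * g') with hT
    have hP00 : a - X*d + (X*Z - Y)*g' = 0 := by rw [hX, hY, hZ]; field_simp; ring
    have hQ : b - X*e + (X*Z - Y)*h' = 0 := by rw [hX, hY, hZ]; field_simp; ring
    have hP10 : d - Z*g' = 0 := by rw [hZ]; field_simp; ring
    have hR : c - X*f + (X*Z - Y)*i = 1 / (d * h' - e * g') := by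
      rw [hX, hY, hZ]; field_simp; linear_combination g' * hdet
    have h11 : e - Z*h' = -(d * h' - e * g') / g' := by rw [hZ]; field_simp; ring
    have h12 : (e - Z*h')*T + (f - Z*i) = 0 := by rw [hZ, hT]; field_simp; ring
    have h21 : g'*R + h' = 0 := by rw [hRv]; field_simp; ring
    have h22 : g'*S + h'*T + i = 0 := by rw [hS, hT]; field_simp; ring
    rw [conj_formula]
    ext j k
    fin_cases j <;> fin_cases k <;>
      simp only [Fin.isValue, Matrix.cons_val', Matrix.cons_val_zero, Matrix.cons_val_one,
          Matrix.head_cons, Matrix.empty_val', Matrix.cons_val_fin_one, Fin.mk_zero, Fin.mk_one,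
          show (⟨2, by norm_num⟩ : Fin 3) = 2 from rfl, Matrix.cons_val_two, Matrix.tail_cons,
          Matrix.head_fin_const, Matrix.of_apply]
    · linear_combination hP00
    · linear_combination R * hP00 + hQ
    · linear_combination S * hP00 + T * hQ + hR
    · linear_combination hP10
    · linear_combination R * hP10 + h11
    · linear_combination S * hP10 + h12
    · linear_combination h21
    · linear_combination h22
  refine ⟨⟨((a * h' - b * g') / (d * h' - e * g'), a / g', d / g', -h' / g',
      (e * i - f * h') / (d * h' - e * g'), (f * g' - d * i) / (d * h' - e * g')), ?_, ?_⟩, key⟩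
  · dsimp only
    rw [IsCounterDiag3, key]
    exact ⟨rfl, rfl, rfl, rfl, rfl, rfl⟩
  · rintro ⟨x, y, z, r, s, t⟩ hp
    rw [IsCounterDiag3] at hp
    dsimp only at hp
    rw [hm, conj_formula] at hp
    simp only [Matrix.cons_val', Matrix.cons_val_zero, Matrix.cons_val_one, Matrix.head_cons,
      Matrix.empty_val', Matrix.cons_val_fin_one, Matrix.cons_val_two, Matrix.tail_cons,
      Matrix.head_fin_const, Matrix.of_apply] at hp
    obtain ⟨E00, E01, E10, E12, E21, E22⟩ := hp
    have hz : z = d / g' := by field_simp; linear_combination -E10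
    have hr : r = -h' / g' := by field_simp; linear_combination E21
    have hy : y = a / g' := by field_simp; linear_combination -E00 - x * E10
    subst hz hr hy
    have hx : x = (a * h' - b * g') / (d * h' - e * g') := by
      field_simp at E01 ⊢
      linear_combination E01
    have ht : t = (f * g' - d * i) / (d * h' - e * g') := by
      field_simp at E12 ⊢
      linear_combination -E12
    subst hx ht
    have hs : s = (e * i - f * h') / (d * h' - e * g') := by
      field_simp at E22 ⊢
      apply mul_left_cancel₀ h1
      linear_combination E22
    subst hs
    rfl
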